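/- Every contextual category with families has finite products. -/

import Mathlib

open CategoryTheory Opposite

universe v u w

/-- A category with families: a category with a distinguished terminal object,
a presheaf of types, terms over each type, and context extensions representing
the functor `(Δ, σ) ↦ Tm_Δ(A[σ])`. -/
structure CwF where
  C : Type u
  [cat : Category.{v} C]
  unit : C
  isTerminal : Limits.IsTerminal unit
  Ty : Cᵒᵖ ⥤ Type w
  Tm : ∀ {Γ : C}, Ty.obj (op Γ) → Type w
  sub : ∀ {Δ Γ : C} (σ : Δ ⟶ Γ) {A : Ty.obj (op Γ)}, Tm A → Tm (Ty.map σ.op A)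
  ext : ∀ {Γ : C}, Ty.obj (op Γ) → C
  disp : ∀ {Γ : C} (A : Ty.obj (op Γ)), ext A ⟶ Γ
  /-- `Γ.A` represents the functor `(Δ, σ) ↦ Tm_Δ(A[σ])` on the slice over `Γ`. -/
  extend : ∀ {Δ Γ : C} (σ : Δ ⟶ Γ) (A : Ty.obj (op Γ)),
      Tm (Ty.map σ.op A) ≃ { τ : Δ ⟶ ext A // τ ≫ disp A = σ }
  extend_natural : ∀ {Δ' Δ Γ : C} (ρ : Δ' ⟶ Δ) (σ : Δ ⟶ Γ) (A : Ty.obj (op Γ))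
      (a : Tm (Ty.map σ.op A)),
      (extend (ρ ≫ σ) A (cast (congrArg (fun X : Ty.obj (op Δ') => Tm X)
          (by simp : Ty.map ρ.op (Ty.map σ.op A) = Ty.map (ρ ≫ σ).op A)) (sub ρ a))).1
        = ρ ≫ (extend σ A a).1

attribute [instance] CwF.cat

/-- A morphism is a fibration if it is isomorphic over its codomain to a display map. -/
def CwF.Fibration (M : CwF.{v, u, w}) {Δ Γ : M.C} (p : Δ ⟶ Γ) : Prop :=
  ∃ (A : M.Ty.obj (op Γ)) (e : Δ ≅ M.ext A), e.hom ≫ M.disp A = p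

/-- A CwF is contextual if every context is fibrant. -/
def CwF.Contextual (M : CwF.{v, u, w}) : Prop :=
  ∀ Γ : M.C, M.Fibration (M.isTerminal.from Γ)

namespace CwF

variable (M : CwF.{v, u, w})

lemma TmCast {Γ : M.C} {A₁ A₂ : M.Ty.obj (op Γ)} (h : A₁ = A₂) : M.Tm A₁ = M.Tm A₂ :=
  congrArg (fun X => M.Tm X) h

lemma extend_fst_congr {Δ Γ : M.C} {σ₁ σ₂ : Δ ⟶ Γ} (hσ : σ₁ = σ₂) (A : M.Ty.obj (op Γ))
    (a : M.Tm (M.Ty.map σ₁.op A)) :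
    (M.extend σ₂ A (cast (M.TmCast (by rw [hσ])) a)).1 = (M.extend σ₁ A a).1 := by
  subst hσ; rfl

lemma sub_cast {Δ Γ : M.C} (ρ : Δ ⟶ Γ) {A₁ A₂ : M.Ty.obj (op Γ)} (hA : A₁ = A₂) (a : M.Tm A₁) :
    M.sub ρ (cast (M.TmCast hA) a) = cast (M.TmCast (by rw [hA])) (M.sub ρ a) := by
  subst hA; rfl

end CwF

universe x

lemma heq_of_double_cast {α β γ : Sort x} (h1 : α = β) (h2 : β = γ) (a : α) {c : γ}
    (hc : cast h2 (cast h1 a) = c) : HEq a c := by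
  subst h1 h2 hc; rfl

lemma cast_eq_cast_of_heq {α β γ : Sort x} (h1 : α = γ) (h2 : β = γ) {a : α} {b : β}
    (h : HEq a b) : cast h1 a = cast h2 b := by
  subst h2; subst h1; rw [eq_of_heq h]

lemma cast_cast_self {α β : Sort x} (h1 : α = β) (h2 : β = α) (a : α) :
    cast h2 (cast h1 a) = a := by subst h1; rfl

/-- Every contextual category with families has finite products. -/
theorem cwf_contextual_hasFiniteProducts (M : CwF.{v, u, w}) (h : M.Contextual) :
    Limits.HasFiniteProducts M.C := by
  haveI : Limits.HasTerminal M.C := M.isTerminal.hasTerminal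
  have hbl : ∀ X Y : M.C, Limits.HasLimit (Limits.pair X Y) := by
    intro Γ Δ
    obtain ⟨A, e, -⟩ := h Δ
    set p : Γ ⟶ M.unit := M.isTerminal.from Γ with hp
    set B : M.Ty.obj (op Γ) := M.Ty.map p.op A with hB
    have hBA : ∀ {Θ : M.C} (f : Θ ⟶ Γ),
        M.Ty.map f.op B = M.Ty.map (M.isTerminal.from Θ).op A := by
      intro Θ f
      have h1 : f ≫ p = M.isTerminal.from Θ := M.isTerminal.hom_ext _ _
      calc M.Ty.map f.op B = M.Ty.map (f ≫ p).op A := by rw [hB]; simp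
        _ = _ := by rw [h1]
    -- the generic term
    set v : M.Tm (M.Ty.map (M.disp B).op B) :=
      (M.extend (M.disp B) B).symm ⟨𝟙 _, Category.id_comp _⟩ with hv
    set v' : M.Tm (M.Ty.map (M.isTerminal.from (M.ext B)).op A) :=
      cast (M.TmCast (hBA (M.disp B))) v with hv'
    set w : M.ext B ⟶ M.ext A :=
      (M.extend (M.isTerminal.from (M.ext B)) A v').1 with hw
    -- key computation
    have key : ∀ {Θ : M.C} (f : Θ ⟶ Γ) (b : M.Tm (M.Ty.map f.op B)),
        (M.extend f B b).1 ≫ w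
          = (M.extend (M.isTerminal.from Θ) A (cast (M.TmCast (hBA f)) b)).1 := by
      intro Θ f b
      have hτd : (M.extend f B b).1 ≫ M.disp B = f := (M.extend f B b).2
      have h1 := M.extend_natural (M.extend f B b).1 (M.isTerminal.from (M.ext B)) A v'
      rw [← hw] at h1
      have h2 : (M.extend f B b).1 ≫ M.isTerminal.from (M.ext B) = M.isTerminal.from Θ :=
        M.isTerminal.hom_ext _ _
      -- identify (sub τ v) with b
      have h3 := M.extend_natural (M.extend f B b).1 (M.disp B) B v
      have h4 : ((M.extend (M.disp B) B) v).1 = 𝟙 (M.ext B) := by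
        rw [hv, Equiv.apply_symm_apply]
      rw [h4, Category.comp_id] at h3
      have h6 := (M.extend f B).injective
        (Subtype.ext ((M.extend_fst_congr hτd B _).trans h3))
      have h7 : HEq (M.sub (M.extend f B b).1 v) b := heq_of_double_cast _ _ _ h6
      have hsub : M.sub (M.extend f B b).1 v'
          = cast (M.TmCast (by rw [hBA (M.disp B)]))
            (M.sub (M.extend f B b).1 v) := by
        rw [hv']; exact M.sub_cast _ (hBA (M.disp B)) v
      have h8 : HEq (M.sub (M.extend f B b).1 v') b := by
        rw [hsub]; exact HEq.trans (cast_heq _ _) h7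
      rw [← h1, ← M.extend_fst_congr h2 A]
      refine congrArg (fun t => ((M.extend (M.isTerminal.from Θ) A) t).1) ?_
      rw [cast_cast]
      exact cast_eq_cast_of_heq _ _ h8
    -- the binary fan
    refine Limits.HasLimit.mk ⟨Limits.BinaryFan.mk (M.disp B) (w ≫ e.inv),
      Limits.BinaryFan.isLimitMk (fun s => (M.extend s.fst B
        (cast (M.TmCast (hBA s.fst).symm) ((M.extend (M.isTerminal.from s.pt) A).symm
          ⟨s.snd ≫ e.hom, M.isTerminal.hom_ext _ _⟩))).1) (fun s => ?_) (fun s => ?_)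
      (fun s m hm1 hm2 => ?_)⟩
    · exact (M.extend s.fst B _).2
    · dsimp only
      have hk2 := key (Θ := s.pt) s.fst
        (cast (M.TmCast (hBA s.fst).symm) ((M.extend (M.isTerminal.from s.pt) A).symm
          ⟨s.snd ≫ e.hom, M.isTerminal.hom_ext _ _⟩))
      rw [cast_cast_self, Equiv.apply_symm_apply] at hk2
      have hfin : (M.extend (Δ := s.pt) s.fst B
          (cast (M.TmCast (hBA s.fst).symm) ((M.extend (M.isTerminal.from s.pt) A).symm
            ⟨s.snd ≫ e.hom, M.isTerminal.hom_ext _ _⟩))).1 ≫ w ≫ e.inv = s.snd := by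
        exact (Category.assoc _ _ _).symm.trans ((congrArg (· ≫ e.inv) hk2).trans ((Category.assoc _ _ _).trans ((congrArg (s.snd ≫ ·) e.hom_inv_id).trans (Category.comp_id _))))
      exact hfin
    · -- uniqueness
      have hmb : m = (M.extend (Δ := s.pt) s.fst B
          ((M.extend (Δ := s.pt) s.fst B).symm ⟨m, hm1⟩)).1 := by
        rw [Equiv.apply_symm_apply]
      have hmw : m ≫ w = s.snd ≫ e.hom := by rw [← hm2]; simp
      have hk := key (Θ := s.pt) s.fst ((M.extend (Δ := s.pt) s.fst B).symm ⟨m, hm1⟩)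
      replace hk := hmw.symm.trans ((congrArg (· ≫ w) hmb).trans hk)
      have ha : (M.extend (M.isTerminal.from s.pt) A).symm ⟨s.snd ≫ e.hom,
          M.isTerminal.hom_ext _ _⟩
          = cast (M.TmCast (hBA s.fst)) ((M.extend (Δ := s.pt) s.fst B).symm ⟨m, hm1⟩) :=
        (M.extend (M.isTerminal.from s.pt) A).symm_apply_eq.mpr (Subtype.ext hk)
      have hfin : m = (M.extend (Δ := s.pt) s.fst B
          (cast (M.TmCast (hBA s.fst).symm) ((M.extend (M.isTerminal.from s.pt) A).symm
            ⟨s.snd ≫ e.hom, M.isTerminal.hom_ext _ _⟩))).1 := by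
        rw [ha]; exact hmb.trans (congrArg (fun t => ((M.extend (Δ := s.pt) s.fst B) t).1) (cast_cast_self _ _ _).symm)
      exact hfin
  haveI : Limits.HasBinaryProducts M.C := by
    constructor
    intro F
    haveI := hbl (F.obj ⟨Limits.WalkingPair.left⟩) (F.obj ⟨Limits.WalkingPair.right⟩)
    exact Limits.hasLimit_of_iso (Limits.diagramIsoPair F).symm
  exact hasFiniteProducts_of_has_binary_and_terminal
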